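/- Let ψ : ℝⁿ ⇉ ℝⁿ satisfy the (Γ₁)-condition and V : ℝⁿ → ℝⁿ be L-} Lipschitz continuous and η-strongly monotone. Let μ > 0 and ρ > 0 satisfy ‖P_{ψ(r)}(y) − P_{ψ(s)}(y)‖ ≤ ρ‖r − s‖ for all y, r, s ∈ ℝⁿ, assume θ := η − ρ − 1/2 − L²/2 − μ²/2 + μη > 0 and √(L² − 2ημ + μ²) + ρ < μ, and set θ₁ := θ/(2L + ρ + μ)². Suppose the constants σ, τ satisfy 0 < σ < 1 and 0 < τ < θ₁ · min{(1 − σ)/4, σ²/(4 − σ)}. Let x₀, x₁ ∈ ℝⁿ and define the iteration x_{n+1} = x_n + (1 − σ)(x_n − x_{n−1}) + τ(P_{ψ(x_n)}(V(x_n) − μ x_n) − V(x_n)) for n ≥ 1. Then the sequence {x_n} converges linearly to the unique solution x* of the inverse quasi-variational inequality problem; more precisely, there exist constants ε > 1 and M > 0 such that ‖x_n − x*‖² ≤ M (n + 1) ε^{−n} for all n ≥ 1. -/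

import Mathlib

open scoped RealInnerProductSpace
open MeasureTheory

/- Metric projection onto a set `C ⊆ ℝⁿ`: when `C` is nonempty, closed and convex this is
the unique nearest point of `C`. -/
open Classical in
noncomputable def metricProj {d : ℕ} (C : Set (EuclideanSpace ℝ (Fin d)))
    (x : EuclideanSpace ℝ (Fin d)) : EuclideanSpace ℝ (Fin d) :=
  if h : ∃ y, y ∈ C ∧ ∀ z ∈ C, ‖x - y‖ ≤ ‖x - z‖ then h.choose else x

section helpers

variable {d : ℕ}

lemma metricProj_spec {C : Set (EuclideanSpace ℝ (Fin d))} (hne : C.Nonempty)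
    (hcl : IsClosed C) (hcv : Convex ℝ C) (x : EuclideanSpace ℝ (Fin d)) :
    metricProj C x ∈ C ∧ ∀ z ∈ C, ⟪x - metricProj C x, z - metricProj C x⟫ ≤ 0 := by
  obtain ⟨v, hvC, hv⟩ := exists_norm_eq_iInf_of_complete_convex hne hcl.isComplete hcv x
  have hbdd : BddBelow (Set.range fun w : C => ‖x - (w : EuclideanSpace ℝ (Fin d))‖) :=
    ⟨0, by rintro _ ⟨w, rfl⟩; positivity⟩
  have hex : ∃ y, y ∈ C ∧ ∀ z ∈ C, ‖x - y‖ ≤ ‖x - z‖ := by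
    refine ⟨v, hvC, fun z hz => ?_⟩
    rw [hv]
    exact ciInf_le hbdd ⟨z, hz⟩
  have hdef : metricProj C x = hex.choose := dif_pos hex
  obtain ⟨hmem, hmin⟩ := hex.choose_spec
  haveI : Nonempty C := ⟨⟨v, hvC⟩⟩
  have heq : ‖x - hex.choose‖ = ⨅ w : C, ‖x - (w : EuclideanSpace ℝ (Fin d))‖ :=
    le_antisymm (le_ciInf fun w => hmin w w.2) (ciInf_le hbdd ⟨_, hmem⟩)
  rw [hdef]
  exact ⟨hmem, (norm_eq_iInf_iff_real_inner_le_zero hcv hmem).mp heq⟩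

lemma metricProj_eq {C : Set (EuclideanSpace ℝ (Fin d))} (hne : C.Nonempty)
    (hcl : IsClosed C) (hcv : Convex ℝ C) {x v : EuclideanSpace ℝ (Fin d)} (hvC : v ∈ C)
    (hv : ∀ z ∈ C, ⟪x - v, z - v⟫ ≤ 0) : metricProj C x = v := by
  obtain ⟨hpC, hp⟩ := metricProj_spec hne hcl hcv x
  set p := metricProj C x with hpdef
  have h1 : ⟪x - p, v - p⟫ ≤ 0 := hp v hvC
  have h2 : ⟪x - v, p - v⟫ ≤ 0 := hv p hpC
  have key : ⟪v - p, v - p⟫ ≤ 0 := by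
    have e1 : ⟪v - p, v - p⟫ = ⟪x - p, v - p⟫ - ⟪x - v, v - p⟫ := by
      rw [← inner_sub_left]
      congr 1
      abel
    have e2 : ⟪x - v, v - p⟫ = -⟪x - v, p - v⟫ := by
      rw [show v - p = -(p - v) by abel, inner_neg_right]
    rw [e1, e2]
    linarith
  have : v - p = 0 := by
    have h3 : (0:ℝ) ≤ ⟪v - p, v - p⟫ := real_inner_self_nonneg
    have : ⟪v - p, v - p⟫ = 0 := le_antisymm key h3
    exact inner_self_eq_zero.mp this
  have := sub_eq_zero.mp this
  rw [hpdef] at this ⊢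
  exact this.symm

lemma metricProj_nonexp {C : Set (EuclideanSpace ℝ (Fin d))} (hne : C.Nonempty)
    (hcl : IsClosed C) (hcv : Convex ℝ C) (a b : EuclideanSpace ℝ (Fin d)) :
    ‖metricProj C a - metricProj C b‖ ≤ ‖a - b‖ := by
  obtain ⟨hpC, hp⟩ := metricProj_spec hne hcl hcv a
  obtain ⟨hqC, hq⟩ := metricProj_spec hne hcl hcv b
  set p := metricProj C a
  set q := metricProj C b
  have h1 : ⟪a - p, q - p⟫ ≤ 0 := hp q hqC
  have h2 : ⟪b - q, p - q⟫ ≤ 0 := hq p hpC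
  have key : ‖p - q‖^2 ≤ ⟪a - b, p - q⟫ := by
    have e1 : ⟪a - b, p - q⟫ - ⟪p - q, p - q⟫ = ⟪a - p, p - q⟫ - ⟪b - q, p - q⟫ := by
      rw [← inner_sub_left, ← inner_sub_left]
      congr 1
      abel
    have e2 : ⟪a - p, p - q⟫ = -⟪a - p, q - p⟫ := by
      rw [show p - q = -(q - p) by abel, inner_neg_right]
    have e3 : ⟪p - q, p - q⟫ = ‖p - q‖^2 := real_inner_self_eq_norm_sq (p - q)
    linarith
  have hcs := real_inner_le_norm (a - b) (p - q)
  nlinarith [norm_nonneg (p - q), norm_nonneg (a - b)]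

end helpers

set_option maxHeartbeats 1000000 in
lemma step_key_scaled {H : Type*} [NormedAddCommGroup H] [InnerProductSpace ℝ H]
    (σ τ θ B : ℝ) (hσ0 : 0 < σ) (hσ1 : σ < 1) (hτ0 : 0 < τ) (hθpos : 0 < θ) (hB : 0 ≤ B)
    (hτB : τ * B^2 * (4 - σ) ≤ θ * σ^2) (hτθ : 2*(τ*θ) ≤ σ)
    (u D g : H) (hm : ⟪g, u⟫ ≤ -θ * ‖u‖^2) (hl : ‖g‖ ≤ B * ‖u‖) :
    σ*(σ*‖u + ((1-σ) • D + τ • g)‖^2 - σ*(1-σ)*‖u‖^2 + 4*(1-σ)*‖(1-σ) • D + τ • g‖^2)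
      ≤ σ*((1 - τ*θ) * (σ*‖u‖^2 - σ*(1-σ)*‖u - D‖^2 + 4*(1-σ)*‖D‖^2)) := by
  have hσ1' : (0:ℝ) ≤ 1 - σ := by linarith
  have h43 : (0:ℝ) ≤ 4 - 3*σ := by linarith
  have hτB' : (4 - 3*σ)*(τ*B^2) ≤ θ*σ^2 := by
    nlinarith [mul_nonneg (mul_nonneg hτ0.le (sq_nonneg B)) hσ0.le]
  have EN : ‖u + ((1-σ) • D + τ • g)‖^2
      = ‖u‖^2 + 2*((1-σ)*⟪u,D⟫ + τ*⟪u,g⟫) + ‖(1-σ) • D + τ • g‖^2 := by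
    rw [norm_add_sq_real, inner_add_right, real_inner_smul_right, real_inner_smul_right]
  have EM : ‖(1-σ) • D + τ • g‖^2 = (1-σ)^2*‖D‖^2 + 2*((1-σ)*(τ*⟪D,g⟫)) + τ^2*‖g‖^2 := by
    rw [norm_add_sq_real, real_inner_smul_left, real_inner_smul_right, norm_smul, norm_smul,
        Real.norm_eq_abs, Real.norm_eq_abs, abs_of_nonneg hτ0.le, abs_of_nonneg hσ1']
    ring
  have EB : ‖u - D‖^2 = ‖u‖^2 - 2*⟪u,D⟫ + ‖D‖^2 := norm_sub_sq_real u D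
  rw [EN, EM, EB]
  have hm' : ⟪u,g⟫ ≤ -θ * ‖u‖^2 := by rwa [real_inner_comm]
  have hG2 : ‖g‖^2 ≤ B^2*‖u‖^2 := by nlinarith [norm_nonneg g, norm_nonneg u]
  have hDg : ⟪D,g⟫ ≤ ‖D‖*‖g‖ := real_inner_le_norm D g
  have hBsq : (0:ℝ) ≤ ‖u‖^2 - 2*⟪u,D⟫ + ‖D‖^2 := by rw [← EB]; positivity
  have s1 : 0 ≤ σ^2*(1-σ)*(τ*θ)*(‖u‖^2 - 2*⟪u,D⟫ + ‖D‖^2) :=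
    mul_nonneg (mul_nonneg (mul_nonneg (sq_nonneg σ) hσ1') (by positivity)) hBsq
  have s2 : 2*σ^2*τ*⟪u,g⟫ ≤ 2*σ^2*τ*(-θ*‖u‖^2) :=
    mul_le_mul_of_nonneg_left hm' (by positivity)
  have s3 : 2*σ*(1-σ)*τ*(4-3*σ)*⟪D,g⟫ ≤ 2*σ*(1-σ)*τ*(4-3*σ)*(‖D‖*‖g‖) := by
    apply mul_le_mul_of_nonneg_left hDg
    have := hσ0.le
    positivity
  have s4 : 0 ≤ (1-σ)*(4-3*σ)*(σ*‖D‖ - τ*‖g‖)^2 :=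
    mul_nonneg (mul_nonneg hσ1' h43) (sq_nonneg _)
  have s5 : (4-3*σ)*τ^2*‖g‖^2 ≤ (4-3*σ)*τ^2*(B^2*‖u‖^2) :=
    mul_le_mul_of_nonneg_left hG2 (by positivity)
  have s6 : (4-3*σ)*(τ*B^2)*(τ*‖u‖^2) ≤ (θ*σ^2)*(τ*‖u‖^2) :=
    mul_le_mul_of_nonneg_right hτB' (by positivity)
  have s7 : 0 ≤ σ*(1-σ)*(2*σ - 4*(τ*θ))*‖D‖^2 :=
    mul_nonneg (mul_nonneg (mul_nonneg hσ0.le hσ1') (by linarith)) (sq_nonneg _)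
  linarith [s1, s2, s3, s4, s5, s6, s7]
noncomputable def auxE {d : ℕ} (σ : ℝ) (x : ℕ → EuclideanSpace ℝ (Fin d))
    (xs : EuclideanSpace ℝ (Fin d)) (k : ℕ) : ℝ :=
  σ*‖x k - xs‖^2 - σ*(1-σ)*‖x (k-1) - xs‖^2 + 4*(1-σ)*‖x k - x (k-1)‖^2


set_option maxHeartbeats 2000000 in
/-- Linear convergence of the inertial projection algorithm
`x_{n+1} = x_n + (1 − σ)(x_n − x_{n−1}) + τ (P_{ψ(x_n)}(V(x_n) − μ x_n) − V(x_n))`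
to the unique solution `x*` of the IQVIP: there are `ε > 1` and `M > 0` with
`‖x_n − x*‖² ≤ M (n+1) ε^{−n}` for all `n ≥ 1`. -/
theorem stmt_13 {d : ℕ} (ψ : EuclideanSpace ℝ (Fin d) → Set (EuclideanSpace ℝ (Fin d)))
    (V : EuclideanSpace ℝ (Fin d) → EuclideanSpace ℝ (Fin d)) (L η μ ρ θ θ₁ σ τ : ℝ)
    (hΓ₁ : ∀ x, (ψ x).Nonempty ∧ IsClosed (ψ x) ∧ Convex ℝ (ψ x))
    (hL : ∀ y z, ‖V y - V z‖ ≤ L * ‖y - z‖)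
    (hη : ∀ y z, η * ‖y - z‖ ^ 2 ≤ ⟪V y - V z, y - z⟫)
    (hμ : 0 < μ) (hρ : 0 < ρ)
    (hproj : ∀ y r s, ‖metricProj (ψ r) y - metricProj (ψ s) y‖ ≤ ρ * ‖r - s‖)
    (hθ : θ = η - ρ - 1/2 - L^2/2 - μ^2/2 + μ*η) (hθpos : 0 < θ)
    (hcond : Real.sqrt (L^2 - 2*η*μ + μ^2) + ρ < μ)
    (hθ₁ : θ₁ = θ / (2*L + ρ + μ)^2)
    (hσ0 : 0 < σ) (hσ1 : σ < 1)
    (hτ0 : 0 < τ) (hτ : τ < θ₁ * min ((1 - σ)/4) (σ^2/(4 - σ)))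
    (x : ℕ → EuclideanSpace ℝ (Fin d))
    (hiter : ∀ n : ℕ, 1 ≤ n →
      x (n+1) = x n + (1 - σ) • (x n - x (n-1)) +
        τ • (metricProj (ψ (x n)) (V (x n) - μ • x n) - V (x n)))
    (xs : EuclideanSpace ℝ (Fin d))
    (hxs : V xs ∈ ψ xs ∧ ∀ z ∈ ψ xs, 0 ≤ ⟪xs, z - V xs⟫) :
    ∃ ε M : ℝ, 1 < ε ∧ 0 < M ∧
      ∀ n : ℕ, 1 ≤ n → ‖x n - xs‖ ^ 2 ≤ M * (n + 1) * ε⁻¹ ^ n := by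
  classical
  rcases Nat.eq_zero_or_pos d with hd | hd
  · subst hd
    refine ⟨2, 1, one_lt_two, one_pos, fun n hn => ?_⟩
    have hx0 : x n - xs = 0 := by ext i; exact i.elim0
    rw [hx0, norm_zero]
    have : (0:ℝ) < 1 * (n + 1) * (2:ℝ)⁻¹ ^ n := by positivity
    nlinarith
  -- main case
  set y0 : EuclideanSpace ℝ (Fin d) := EuclideanSpace.single ⟨0, hd⟩ 1 with hy0def
  have hy0 : ‖y0 - 0‖ = 1 := by
    rw [sub_zero, hy0def, EuclideanSpace.norm_single, norm_one]
  have hL0 : 0 ≤ L := by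
    have h := hL y0 0
    rw [hy0] at h
    nlinarith [norm_nonneg (V y0 - V 0)]
  have hηL : η ≤ L := by
    have h1 := hη y0 0
    have h2 := real_inner_le_norm (V y0 - V 0) (y0 - 0)
    have h3 := hL y0 0
    rw [hy0] at h1 h2 h3
    nlinarith [norm_nonneg (V y0 - V 0)]
  have hVmu : ∀ y z : EuclideanSpace ℝ (Fin d),
      ‖(V y - μ • y) - (V z - μ • z)‖^2 ≤ (L^2 - 2*η*μ + μ^2) * ‖y - z‖^2 := by
    intro y z
    have e : (V y - μ • y) - (V z - μ • z) = (V y - V z) - μ • (y - z) := by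
      rw [smul_sub]; abel
    rw [e, norm_sub_sq_real, real_inner_smul_right, norm_smul, Real.norm_eq_abs, abs_of_pos hμ]
    have h1 := hL y z
    have h2 := mul_le_mul_of_nonneg_left (hη y z) hμ.le
    nlinarith [norm_nonneg (V y - V z), norm_nonneg (y - z),
      mul_self_le_mul_self (norm_nonneg (V y - V z)) h1]
  have hK0 : 0 ≤ L^2 - 2*η*μ + μ^2 := by
    have h := hVmu y0 0
    rw [hy0] at h
    nlinarith [norm_nonneg ((V y0 - μ • y0) - (V 0 - μ • (0 : EuclideanSpace ℝ (Fin d))))]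
  have hθL : θ ≤ L := by rw [hθ]; nlinarith
  have hKμ : L^2 - 2*η*μ + μ^2 ≤ μ^2 := by
    have h1 := Real.sq_sqrt hK0
    have h2 := Real.sqrt_nonneg (L^2 - 2*η*μ + μ^2)
    nlinarith [hcond, hρ, hμ]
  obtain ⟨hxs1, hxs2⟩ := hxs
  have hsol : metricProj (ψ xs) (V xs - μ • xs) = V xs := by
    obtain ⟨hne, hcl, hcv⟩ := hΓ₁ xs
    refine metricProj_eq hne hcl hcv hxs1 fun z hz => ?_
    have e : (V xs - μ • xs) - V xs = -(μ • xs) := by abel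
    rw [e, inner_neg_left, real_inner_smul_left]
    have h := hxs2 z hz
    nlinarith
  set B : ℝ := 2*L + ρ + μ with hBdef
  clear_value B
  have hBpos : 0 < B := by rw [hBdef]; linarith
  -- distance from projection point to V xs
  have hPd : ∀ y : EuclideanSpace ℝ (Fin d),
      ‖metricProj (ψ y) (V y - μ • y) - V xs‖ ≤
        ρ * ‖y - xs‖ + ‖(V y - μ • y) - (V xs - μ • xs)‖ := by
    intro y
    obtain ⟨hne, hcl, hcv⟩ := hΓ₁ xs
    have t1 := hproj (V y - μ • y) y xs
    have t2 := metricProj_nonexp hne hcl hcv (V y - μ • y) (V xs - μ • xs)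
    calc ‖metricProj (ψ y) (V y - μ • y) - V xs‖
        ≤ ‖metricProj (ψ y) (V y - μ • y) - metricProj (ψ xs) (V y - μ • y)‖
          + ‖metricProj (ψ xs) (V y - μ • y) - V xs‖ :=
          norm_sub_le_norm_sub_add_norm_sub _ _ _
      _ ≤ ρ * ‖y - xs‖ + ‖(V y - μ • y) - (V xs - μ • xs)‖ := by
          rw [hsol] at t2
          exact add_le_add t1 t2
  have hmono : ∀ y : EuclideanSpace ℝ (Fin d),
      ⟪metricProj (ψ y) (V y - μ • y) - V y, y - xs⟫ ≤ -θ * ‖y - xs‖^2 := by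
    intro y
    have hinner : ⟪metricProj (ψ y) (V y - μ • y) - V y, y - xs⟫ =
        ⟪metricProj (ψ y) (V y - μ • y) - V xs, y - xs⟫ - ⟪V y - V xs, y - xs⟫ := by
      rw [← inner_sub_left]
      congr 1
      abel
    have hcs := real_inner_le_norm (metricProj (ψ y) (V y - μ • y) - V xs) (y - xs)
    have hmon := hη y xs
    have hv2 := hVmu y xs
    have hp := hPd y
    rw [hinner, hθ]
    have hh0 : (0:ℝ) ≤ ‖y - xs‖ := norm_nonneg _
    have hw0 : (0:ℝ) ≤ ‖(V y - μ • y) - (V xs - μ • xs)‖ := norm_nonneg _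
    nlinarith [mul_le_mul_of_nonneg_right hp hh0,
      sq_nonneg (‖(V y - μ • y) - (V xs - μ • xs)‖ - ‖y - xs‖)]
  have hlip : ∀ y : EuclideanSpace ℝ (Fin d),
      ‖metricProj (ψ y) (V y - μ • y) - V y‖ ≤ B * ‖y - xs‖ := by
    intro y
    have hh0 : (0:ℝ) ≤ ‖y - xs‖ := norm_nonneg _
    have hw : ‖(V y - μ • y) - (V xs - μ • xs)‖ ≤ μ * ‖y - xs‖ := by
      have hv2 := hVmu y xs
      have h1 : ‖(V y - μ • y) - (V xs - μ • xs)‖^2 ≤ (μ * ‖y - xs‖)^2 := by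
        nlinarith [hKμ, sq_nonneg ‖y - xs‖]
      calc ‖(V y - μ • y) - (V xs - μ • xs)‖
          = Real.sqrt (‖(V y - μ • y) - (V xs - μ • xs)‖^2) :=
            (Real.sqrt_sq (norm_nonneg _)).symm
        _ ≤ Real.sqrt ((μ * ‖y - xs‖)^2) := Real.sqrt_le_sqrt h1
        _ = μ * ‖y - xs‖ := Real.sqrt_sq (by positivity)
    have htri : ‖metricProj (ψ y) (V y - μ • y) - V y‖ ≤
        ‖metricProj (ψ y) (V y - μ • y) - V xs‖ + ‖V xs - V y‖ :=
      norm_sub_le_norm_sub_add_norm_sub _ _ _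
    have hLy : ‖V xs - V y‖ ≤ L * ‖y - xs‖ := by
      have h := hL xs y
      rwa [norm_sub_rev xs y] at h
    have hp := hPd y
    have hLh : 0 ≤ L * ‖y - xs‖ := mul_nonneg hL0 hh0
    rw [hBdef]
    nlinarith
  -- constants
  have hθ₁pos : 0 < θ₁ := by
    rw [hθ₁]
    have : (0:ℝ) < (2*L + ρ + μ)^2 := by positivity
    positivity
  have h4σ : (0:ℝ) < 4 - σ := by linarith
  have hτB : τ * B^2 * (4 - σ) ≤ θ * σ^2 := by
    have h1 : τ ≤ θ₁ * (σ^2/(4-σ)) :=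
      le_trans hτ.le (mul_le_mul_of_nonneg_left (min_le_right _ _) hθ₁pos.le)
    rw [hθ₁] at h1
    have hB2 : (0:ℝ) < B^2 := by positivity
    rw [div_mul_div_comm, le_div_iff₀ (by positivity)] at h1
    · nlinarith
  have hθB : 2*θ ≤ B := by rw [hBdef]; linarith
  have hτθ : 2*(τ*θ) ≤ σ := by
    have e1 : τ*θ*(B^2*(4-σ)) ≤ θ^2*σ^2 := by nlinarith [hθpos.le]
    have e2 : θ^2 ≤ B^2/4 := by nlinarith
    have e3 : θ^2*σ^2 ≤ (B^2/4)*σ^2 := by nlinarith [sq_nonneg σ]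
    have hB2 : (0:ℝ) < B^2 := by positivity
    have e4 : (τ*θ*(4-σ))*B^2 ≤ (σ^2/4)*B^2 := by nlinarith
    have e5 : τ*θ*(4-σ) ≤ σ^2/4 := le_of_mul_le_mul_right e4 hB2
    have m1 : 0 ≤ τ*θ := (mul_pos hτ0 hθpos).le
    have m2 : 0 ≤ (τ*θ)*(1-σ) := mul_nonneg m1 (by linarith)
    have m3 : 0 ≤ σ*(1-σ) := mul_nonneg hσ0.le (by linarith)
    nlinarith [e5, m2, m3]
  have hq0 : 0 < 1 - τ*θ := by linarith
  have hq1 : 1 - τ*θ < 1 := by nlinarith [mul_pos hτ0 hθpos]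
  -- the recursion for the Lyapunov function
  have hstep : ∀ n : ℕ, 1 ≤ n → auxE σ x xs (n+1) ≤ (1 - τ*θ) * auxE σ x xs n := by
    intro n hn
    have hx := hiter n hn
    set g := metricProj (ψ (x n)) (V (x n) - μ • x n) - V (x n) with hgdef
    have hm := hmono (x n)
    have hl := hlip (x n)
    have e1 : x (n+1) - xs = (x n - xs) + ((1-σ) • (x n - x (n-1)) + τ • g) := by
      rw [hx]; abel
    have e2 : x (n+1) - x n = (1-σ) • (x n - x (n-1)) + τ • g := by
      rw [hx]; abel
    have e3 : x (n-1) - xs = (x n - xs) - (x n - x (n-1)) := by abel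
    have key := step_key_scaled σ τ θ B hσ0 hσ1 hτ0 hθpos hBpos.le hτB hτθ
      (x n - xs) (x n - x (n-1)) g hm hl
    have key2 := le_of_mul_le_mul_left key hσ0
    simp only [auxE, Nat.add_sub_cancel]
    rw [e1, e2, e3]
    linarith [key2]
  set C : ℝ := max (auxE σ x xs 1) 0 with hCdef
  clear_value C
  have hC0 : 0 ≤ C := by rw [hCdef]; exact le_max_right _ _
  have hE1 : ∀ n : ℕ, 1 ≤ n → auxE σ x xs n ≤ (1 - τ*θ)^(n-1) * C := by
    intro n hn
    induction n, hn using Nat.le_induction with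
    | base =>
        simp only [Nat.sub_self, pow_zero, one_mul]
        rw [hCdef]
        exact le_max_left _ _
    | succ n hn ih =>
        calc auxE σ x xs (n+1) ≤ (1 - τ*θ) * auxE σ x xs n := hstep n hn
          _ ≤ (1 - τ*θ) * ((1 - τ*θ)^(n-1) * C) := mul_le_mul_of_nonneg_left ih hq0.le
          _ = (1 - τ*θ)^(n+1-1) * C := by
              rw [Nat.add_sub_cancel, ← mul_assoc, ← pow_succ', Nat.sub_add_cancel hn]
  have hrec : ∀ n : ℕ, 1 ≤ n →
      ‖x n - xs‖^2 ≤ (1-σ)*‖x (n-1) - xs‖^2 + (1 - τ*θ)^(n-1) * (C/σ) := by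
    intro n hn
    have h1 := hE1 n hn
    have h3 : 0 ≤ 4*(1-σ)*‖x n - x (n-1)‖^2 := by
      have : (0:ℝ) ≤ 1 - σ := by linarith
      positivity
    simp only [auxE] at h1
    have h2 : σ*‖x n - xs‖^2 - σ*(1-σ)*‖x (n-1) - xs‖^2 ≤ (1 - τ*θ)^(n-1)*C := by linarith
    have hmul : σ*((1-σ)*‖x (n-1) - xs‖^2 + (1 - τ*θ)^(n-1)*(C/σ))
        = σ*(1-σ)*‖x (n-1) - xs‖^2 + (1 - τ*θ)^(n-1)*C := by
      field_simp
    refine le_of_mul_le_mul_left ?_ hσ0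
    rw [hmul]
    linarith
  set r : ℝ := max (1-σ) (1 - τ*θ) with hrdef
  clear_value r
  have hr0 : 0 < r := by rw [hrdef]; exact lt_of_lt_of_le hq0 (le_max_right _ _)
  have hr1 : r < 1 := by rw [hrdef]; exact max_lt (by linarith) hq1
  have hαr : 1 - σ ≤ r := by rw [hrdef]; exact le_max_left _ _
  have hqr : 1 - τ*θ ≤ r := by rw [hrdef]; exact le_max_right _ _
  set Kq : ℝ := C/(σ*(1 - τ*θ)) with hKqdef
  clear_value Kq
  have hKq0 : 0 ≤ Kq := by
    rw [hKqdef]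
    exact div_nonneg hC0 (by positivity)
  have hCσ : C/σ = Kq*(1 - τ*θ) := by
    rw [hKqdef]
    field_simp
  have hgeo : ∀ n : ℕ, ‖x n - xs‖^2 ≤ (‖x 0 - xs‖^2 + Kq*n)*r^n := by
    intro n
    induction n with
    | zero => simp
    | succ n ih =>
        push_cast
        have hrec' := hrec (n+1) (Nat.le_add_left 1 n)
        rw [Nat.add_sub_cancel] at hrec'
        have hpow : (1 - τ*θ)^n ≤ r^n := pow_le_pow_left₀ hq0.le hqr n
        have hpn : (0:ℝ) ≤ r^n := pow_nonneg hr0.le n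
        have hcast : (0:ℝ) ≤ (n:ℝ) := Nat.cast_nonneg n
        have t1 : (1-σ)*‖x n - xs‖^2 ≤ r*((‖x 0 - xs‖^2 + Kq*n)*r^n) :=
          mul_le_mul hαr ih (by positivity) hr0.le
        have t2 : (1 - τ*θ)^n*(C/σ) ≤ Kq*(1 - τ*θ)*r^n := by
          rw [hCσ]
          have := mul_le_mul_of_nonneg_right hpow (mul_nonneg hKq0 hq0.le)
          nlinarith [mul_nonneg hKq0 hq0.le]
        have t3 : Kq*(1 - τ*θ)*r^n ≤ Kq*r*r^n :=
          mul_le_mul_of_nonneg_right (mul_le_mul_of_nonneg_left hqr hKq0) hpn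
        calc ‖x (n+1) - xs‖^2
            ≤ (1-σ)*‖x n - xs‖^2 + (1 - τ*θ)^n*(C/σ) := hrec'
          _ ≤ r*((‖x 0 - xs‖^2 + Kq*n)*r^n) + Kq*r*r^n := by linarith
          _ = (‖x 0 - xs‖^2 + Kq*((n:ℝ)+1))*r^(n+1) := by
              rw [pow_succ]
              ring
  refine ⟨r⁻¹, ‖x 0 - xs‖^2 + Kq + 1, (one_lt_inv₀ hr0).mpr hr1, by positivity, fun n hn => ?_⟩
  rw [inv_inv]
  have hpn : (0:ℝ) ≤ r^n := pow_nonneg hr0.le n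
  have hcast : (0:ℝ) ≤ (n:ℝ) := Nat.cast_nonneg n
  have h1 : ‖x 0 - xs‖^2 + Kq*n ≤ (‖x 0 - xs‖^2 + Kq + 1)*(n+1) := by
    nlinarith [sq_nonneg ‖x 0 - xs‖]
  calc ‖x n - xs‖^2 ≤ (‖x 0 - xs‖^2 + Kq*n)*r^n := hgeo n
    _ ≤ (‖x 0 - xs‖^2 + Kq + 1)*(n+1)*r^n := mul_le_mul_of_nonneg_right h1 hpn
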